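/- Let K be an invertible n×n matrix over a field, let x_1, ..., x_k be distinct indices and y_1, ..., y_k be distinct indices in {1,...,n}. Then \sum_{\sigma \in S_n} \left(\prod_{i=1}^k \mathbf{1}\{\sigma(x_i) = y_i\}\right) \operatorname{sgn}(\sigma) \prod_{x=1}^n K_{x, \sigma(x)} = \left(\prod_{i=1}^k K_{x_i, y_i}\right) \det(K) \det_{i,j=1}^k (K^{-1}_{y_i, x_j}). -/

import Mathlib

open Matrix Finset



/-- Jacobi's identity / generalized Cramer's rule: for an invertible matrix `K` and
pairwise distinct row indices `x₁,…,x_k` and pairwise distinct column indices `y₁,…,y_k`,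
the permutation expansion of `det K` restricted to permutations sending each `xᵢ` to `yᵢ`
equals `(∏ᵢ K_{xᵢ yᵢ}) · det K · det (K⁻¹_{yᵢ xⱼ})ᵢⱼ`. -/
theorem jacobi_identity {F : Type*} [Field F] {n k : ℕ}
    (K : Matrix (Fin n) (Fin n) F) (hK : IsUnit K.det)
    (x y : Fin k → Fin n) (hx : Function.Injective x) (hy : Function.Injective y) :
    ∑ σ : Equiv.Perm (Fin n),
        (∏ i : Fin k, if σ (x i) = y i then (1 : F) else 0) *
          ((Equiv.Perm.sign σ : ℤ) : F) * ∏ j : Fin n, K j (σ j)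
      = (∏ i : Fin k, K (x i) (y i)) * K.det *
          Matrix.det (fun i j : Fin k => K⁻¹ (y i) (x j)) := by
  classical
  set B : Matrix (Fin n) (Fin n) F := fun j c =>
    if h : ∃ i, y i = c then (if x h.choose = j then 1 else 0) else K j c with hBdef
  have hBval : ∀ (i : Fin k) (j : Fin n), B j (y i) = if x i = j then 1 else 0 := by
    intro i j
    have h : ∃ i', y i' = y i := ⟨i, rfl⟩
    have hc : h.choose = i := hy h.choose_spec
    simp only [hBdef, dif_pos h, hc]
  have hBnot : ∀ (j c : Fin n), c ∉ Set.range y → B j c = K j c := by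
    intro j c hc
    have h : ¬ ∃ i, y i = c := by
      rintro ⟨i, rfl⟩; exact hc ⟨i, rfl⟩
    simp only [hBdef, dif_neg h]
  -- Step A
  have stepA : ∑ σ : Equiv.Perm (Fin n),
        (∏ i : Fin k, if σ (x i) = y i then (1 : F) else 0) *
          ((Equiv.Perm.sign σ : ℤ) : F) * ∏ j : Fin n, K j (σ j)
      = (∏ i : Fin k, K (x i) (y i)) * B.det := by
    have hdet : B.det = ∑ σ : Equiv.Perm (Fin n),
        ((Equiv.Perm.sign σ : ℤ) : F) * ∏ j : Fin n, B j (σ j) := by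
      rw [← Matrix.det_transpose, Matrix.det_apply']
      rfl
    rw [hdet, Finset.mul_sum]
    refine Finset.sum_congr rfl fun σ _ => ?_
    by_cases hP : ∀ i, σ (x i) = y i
    · have hind : (∏ i : Fin k, if σ (x i) = y i then (1 : F) else 0) = 1 := by
        simp [hP]
      rw [hind, one_mul]
      -- σ j ∉ range y for j ∉ range x
      have hcompl : ∀ j : Fin n, j ∉ Finset.univ.image x → σ j ∉ Set.range y := by
        rintro j hj ⟨i, hi⟩
        have : σ (x i) = σ j := by rw [hP i, hi]
        have := σ.injective this
        exact hj (Finset.mem_image.2 ⟨i, Finset.mem_univ i, this⟩)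
      have hs := (Finset.univ.image x).prod_mul_prod_compl (fun j => K j (σ j))
      have hsB := (Finset.univ.image x).prod_mul_prod_compl (fun j => B j (σ j))
      have h1 : ∏ j ∈ Finset.univ.image x, K j (σ j) = ∏ i : Fin k, K (x i) (y i) := by
        rw [Finset.prod_image (fun a _ b _ h => hx h)]
        exact Finset.prod_congr rfl fun i _ => by rw [hP i]
      have h2 : ∏ j ∈ Finset.univ.image x, B j (σ j) = 1 := by
        rw [Finset.prod_image (fun a _ b _ h => hx h)]
        refine Finset.prod_eq_one fun i _ => ?_
        rw [hP i, hBval i (x i), if_pos rfl]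
      have h3 : ∏ j ∈ (Finset.univ.image x)ᶜ, B j (σ j)
          = ∏ j ∈ (Finset.univ.image x)ᶜ, K j (σ j) := by
        refine Finset.prod_congr rfl fun j hj => ?_
        exact hBnot j (σ j) (hcompl j (Finset.mem_compl.1 hj))
      calc ((Equiv.Perm.sign σ : ℤ) : F) * ∏ j : Fin n, K j (σ j)
          = ((Equiv.Perm.sign σ : ℤ) : F) *
              ((∏ i : Fin k, K (x i) (y i)) * ∏ j ∈ (Finset.univ.image x)ᶜ, K j (σ j)) := by
            rw [← h1, hs]
        _ = (∏ i : Fin k, K (x i) (y i)) *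
              (((Equiv.Perm.sign σ : ℤ) : F) * ∏ j : Fin n, B j (σ j)) := by
            rw [← hsB, h2, one_mul, h3]; ring
    · push_neg at hP
      obtain ⟨i, hi⟩ := hP
      have hind : (∏ i : Fin k, if σ (x i) = y i then (1 : F) else 0) = 0 :=
        Finset.prod_eq_zero (Finset.mem_univ i) (if_neg hi)
      have hBzero : ∏ j : Fin n, B j (σ j) = 0 := by
        refine Finset.prod_eq_zero (Finset.mem_univ (σ⁻¹ (y i))) ?_
        have hσ : σ (σ⁻¹ (y i)) = y i := σ.apply_symm_apply _
        rw [hσ, hBval i]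
        rw [if_neg]
        intro h
        apply hi
        rw [h]
        exact σ.apply_symm_apply _
      rw [hind, hBzero]
      ring
  rw [stepA]
  -- Step B : B.det = K.det * minor
  -- C := K⁻¹ * B
  set C : Matrix (Fin n) (Fin n) F := K⁻¹ * B with hCdef
  have hCval : ∀ (j : Fin n) (i : Fin k), C j (y i) = K⁻¹ j (x i) := by
    intro j i
    rw [hCdef, Matrix.mul_apply]
    rw [Finset.sum_eq_single (x i)]
    · rw [hBval i, if_pos rfl, mul_one]
    · intro b _ hb
      rw [hBval i, if_neg (Ne.symm hb), mul_zero]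
    · intro h; exact absurd (Finset.mem_univ _) h
  have hCnot : ∀ (j c : Fin n), c ∉ Set.range y → C j c = if j = c then 1 else 0 := by
    intro j c hc
    have : C j c = (K⁻¹ * K) j c := by
      rw [hCdef, Matrix.mul_apply, Matrix.mul_apply]
      exact Finset.sum_congr rfl fun b _ => by rw [hBnot b c hc]
    rw [this, Matrix.nonsing_inv_mul K hK, Matrix.one_apply]
  have hdetC : C.det = Matrix.det (fun i j : Fin k => K⁻¹ (y i) (x j)) := by
    let e : Fin k ⊕ ↥(Set.range y)ᶜ ≃ Fin n :=
      (Equiv.sumCongr (Equiv.ofInjective y hy) (Equiv.refl _)).trans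
        (Equiv.Set.sumCompl (Set.range y))
    have he1 : ∀ i : Fin k, e (Sum.inl i) = y i := by
      intro i; simp [e, Equiv.Set.sumCompl]; rfl
    have he2 : ∀ z : ↥(Set.range y)ᶜ, e (Sum.inr z) = (z : Fin n) := by
      intro z; simp [e, Equiv.Set.sumCompl]; rfl
    rw [← Matrix.det_submatrix_equiv_self e C]
    have : C.submatrix e e = Matrix.fromBlocks (fun i j : Fin k => K⁻¹ (y i) (x j)) (0 : Matrix (Fin k) ↥(Set.range y)ᶜ F)
        (fun (z : ↥(Set.range y)ᶜ) (j : Fin k) => K⁻¹ (z : Fin n) (x j)) (1 : Matrix ↥(Set.range y)ᶜ ↥(Set.range y)ᶜ F) := by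
      ext a b
      cases a with
      | inl i => cases b with
        | inl j =>
          simp only [Matrix.submatrix_apply, he1, Matrix.fromBlocks_apply₁₁]
          exact hCval (y i) j
        | inr z =>
          simp only [Matrix.submatrix_apply, he1, he2, Matrix.fromBlocks_apply₁₂]
          rw [hCnot (y i) z z.2]
          rw [if_neg]
          · rfl
          · intro h; exact z.2 ⟨i, h⟩
      | inr z => cases b with
        | inl j =>
          simp only [Matrix.submatrix_apply, he1, he2, Matrix.fromBlocks_apply₂₁]
          exact hCval z j
        | inr w =>
          simp only [Matrix.submatrix_apply, he2]
          rw [hCnot z w w.2]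
          change _ = (1 : Matrix ↥(Set.range y)ᶜ ↥(Set.range y)ᶜ F) z w
          rw [Matrix.one_apply]
          by_cases h : z = w
          · simp [h]
          · rw [if_neg h, if_neg (fun hc => h (Subtype.ext hc))]
    rw [this]
    exact (Matrix.det_fromBlocks_zero₁₂ _ _ _).trans (by simp)
  have h0 : K.det ≠ 0 := hK.ne_zero
  have hB2 : B.det = K.det * C.det := by
    rw [hCdef, Matrix.det_mul, Matrix.det_nonsing_inv, Ring.inverse_eq_inv']
    field_simp
  rw [hB2, hdetC]
  ring
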